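/- Let a, b, p, q be integers with a, b > 0, and suppose q is a perfect square and p = a^h b^h · t² for some integer t. If y is a rational number satisfying y² · (p/q) = a^h b^h + (a^{2h} + b^{2h})(p/q) + a^h b^h (p/q)², then a^h b^h · (a^h q + b^h p) · (a^h p + b^h q) is a perfect square (as a rational/integer square). -/

import Mathlib

theorem stmt_4 (a b p q : ℤ) (h : ℕ) (ha : 0 < a) (hb : 0 < b) (hh : 0 < h)
    (hq : ∃ t : ℤ, q = t ^ 2) (hp : ∃ t : ℤ, p = a ^ h * b ^ h * t ^ 2)
    (y : ℚ)
    (hy : y ^ 2 * ((p : ℚ) / (q : ℚ)) =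
      (a : ℚ) ^ h * (b : ℚ) ^ h +
      ((a : ℚ) ^ (2 * h) + (b : ℚ) ^ (2 * h)) * ((p : ℚ) / (q : ℚ)) +
      (a : ℚ) ^ h * (b : ℚ) ^ h * ((p : ℚ) / (q : ℚ)) ^ 2) :
    IsSquare (a ^ h * b ^ h * (a ^ h * q + b ^ h * p) * (a ^ h * p + b ^ h * q)) := by
  obtain ⟨s, hs⟩ := hq
  obtain ⟨t, ht⟩ := hp
  have hq0 : (q:ℚ) ≠ 0 := by
    intro h0
    rw [h0, div_zero] at hy
    simp at hy
    rcases hy with ⟨h1, _⟩ | ⟨h1, _⟩ <;> omega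
  field_simp at hy
  have key : y ^ 2 * (p:ℚ) * (q:ℚ) = (a:ℚ)^h * (b:ℚ)^h * (q:ℚ)^2
      + ((a:ℚ)^(2*h) + (b:ℚ)^(2*h)) * (p:ℚ) * (q:ℚ) + (a:ℚ)^h * (b:ℚ)^h * (p:ℚ)^2 := by
    apply mul_right_cancel₀ hq0
    apply mul_right_cancel₀ hq0
    linear_combination (q:ℚ)^2 * hy
  rw [← Rat.isSquare_intCast_iff]
  refine ⟨y * a^h * b^h * t * s, ?_⟩
  push_cast [hs, ht]
  push_cast [hs, ht] at key
  linear_combination (-(a:ℚ)^h*(b:ℚ)^h) * key
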